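/- Let p be a prime, w ≥ 1, μ > 0 with 2^μ an integer, and c_μ = 2^μ·sin(π/2^μ)/(p·sin(π/p)). For any sets A₁,…,A_{2^μ} ⊆ F_{p^w} with ∑_{i=1}^{2^μ}|A_i| = p^w, we have ∑_{i=1}^{2^μ} max_{α≠0} |1̂_{A_i}(α)| ≤ c_μ. -/

import Mathlib

open Finset Classical

/-- ω_p = e^{2πi/p}. -/
noncomputable def omg (p : ℕ) : ℂ := Complex.exp (2 * Real.pi * Complex.I / p)

/-- ω_p^{Tr(x)}, where Tr is the field trace from `K` to `ZMod p`. -/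
noncomputable def chr (p : ℕ) [Fact p.Prime] (K : Type*) [Field K] [Algebra (ZMod p) K]
    (x : K) : ℂ := omg p ^ (Algebra.trace (ZMod p) K x).val

/-- Fourier coefficient of the indicator of `A ⊆ K` at `α`. -/
noncomputable def ihat (p : ℕ) [Fact p.Prime] (K : Type*) [Field K] [Fintype K]
    [Algebra (ZMod p) K] (A : Finset K) (α : K) : ℂ :=
  (1 / (Fintype.card K : ℂ)) * ∑ x : K, (if x ∈ A then 1 else 0) * chr p K (α * x)

section aux
open Real MeasureTheory

lemma integ_piece (l r a : ℝ) (h : l ≤ r) :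
    ∫ u, (Set.Ico l r).indicator (fun u => Real.cos u - Real.cos a) u
      = (Real.sin r - Real.sin l) - (r - l) * Real.cos a := by
  rw [MeasureTheory.integral_indicator measurableSet_Ico,
    ← MeasureTheory.integral_Icc_eq_integral_Ico,
    MeasureTheory.integral_Icc_eq_integral_Ioc, ← intervalIntegral.integral_of_le h,
    intervalIntegral.integral_sub (Continuous.intervalIntegrable continuous_cos _ _)
      (intervalIntegrable_const), integral_cos,
    intervalIntegral.integral_const]
  simp [smul_eq_mul]

lemma integrable_piece (l r a : ℝ) :
    Integrable ((Set.Ico l r).indicator (fun u => Real.cos u - Real.cos a)) := by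
  apply MeasureTheory.IntegrableOn.integrable_indicator _ measurableSet_Ico
  apply MeasureTheory.IntegrableOn.mono_set _ Set.Ico_subset_Icc_self
  exact (continuous_cos.sub continuous_const).integrableOn_Icc

lemma two_pi_pos' : (0:ℝ) < 2 * π := by positivity

lemma core (p : ℕ) [NeZero p] (hp : 2 ≤ p) (M : ℝ) (hM : 0 < M) (c : ZMod p → ℝ)
    (h0 : ∀ j, 0 ≤ c j) (hcM : ∀ j, c j ≤ M) (θ : ℝ)
    (ht : ∑ j, c j ≤ p * M / 2) :
    ∑ j, c j * Real.cos (2 * π * (j.val) / p - θ)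
      ≤ M * Real.sin (π * (∑ j, c j) / (p * M)) / Real.sin (π / p) := by
  have hp2 : (2:ℝ) ≤ p := by exact_mod_cast hp
  have hp0 : (0:ℝ) < p := by positivity
  set t : ℝ := ∑ j, c j with htdef
  have ht0 : 0 ≤ t := Finset.sum_nonneg fun j _ => h0 j
  set s : ℝ := π / p with hsdef
  set a : ℝ := π * t / (p * M) with hadef
  have hs0 : 0 < s := by positivity
  have hs2 : s ≤ π / 2 := by
    rw [hsdef, div_le_div_iff₀ hp0 two_pos]
    nlinarith [pi_pos]
  have ha0 : 0 ≤ a := by positivity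
  have ha2 : a ≤ π / 2 := by
    rw [hadef, div_le_div_iff₀ (by positivity) two_pos]
    nlinarith [pi_pos, ht]
  have hsa : s * t = a * M := by
    rw [hsdef, hadef]
    field_simp
  -- the angles
  set φ : ZMod p → ℝ := fun j => toIocMod two_pi_pos' (-π) (2 * π * (j.val) / p - θ) with hφdef
  have hφmem : ∀ j, φ j ∈ Set.Ioc (-π) π := by
    intro j
    have := toIocMod_mem_Ioc two_pi_pos' (-π) (2 * π * (j.val) / p - θ)
    rwa [show -π + 2*π = π by ring] at this
  have hφsub : ∀ j, ∃ z : ℤ, φ j = 2 * π * (j.val) / p - θ - z * (2*π) := by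
    intro j
    refine ⟨toIocDiv two_pi_pos' (-π) (2 * π * (j.val) / p - θ), ?_⟩
    have := self_sub_toIocMod two_pi_pos' (-π) (2 * π * (j.val) / p - θ)
    rw [zsmul_eq_mul] at this
    rw [hφdef]
    linarith
  have hφcos : ∀ j, Real.cos (φ j) = Real.cos (2 * π * (j.val) / p - θ) := by
    intro j
    obtain ⟨z, hz⟩ := hφsub j
    rw [hz, Real.cos_sub_int_mul_two_pi]
  -- disjointness
  have hdisj : ∀ (u : ℝ) (j k : ZMod p), u ∈ Set.Ico (φ j - s) (φ j + s) →
      u ∈ Set.Ico (φ k - s) (φ k + s) → j = k := by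
    intro u j k hj hk
    obtain ⟨zj, hzj⟩ := hφsub j
    obtain ⟨zk, hzk⟩ := hφsub k
    -- φ j - φ k = (2π/p) * m with m : ℤ
    set m : ℤ := (j.val : ℤ) - (k.val : ℤ) - ((zj : ℤ) - zk) * p with hmdef
    have hφm : φ j - φ k = (2 * π / p) * m := by
      rw [hzj, hzk, hmdef]
      push_cast
      field_simp
      ring
    have habs : |φ j - φ k| < 2 * s := by
      rw [abs_sub_lt_iff]
      exact ⟨by linarith [hj.1, hj.2, hk.1, hk.2], by linarith [hj.1, hj.2, hk.1, hk.2]⟩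
    have h2s : 2 * s = 2 * π / p := by rw [hsdef]; ring
    rw [hφm, h2s, abs_mul, abs_of_pos (by positivity : (0:ℝ) < 2*π/p)] at habs
    have : |(m:ℝ)| < 1 := by
      have h2πp : (0:ℝ) < 2*π/p := by positivity
      nlinarith [abs_nonneg ((m:ℝ))]
    have hm0 : m = 0 := by
      have hlt := abs_lt.mp this
      have h1 : (-1:ℤ) < m := by exact_mod_cast hlt.1
      have h2 : m < 1 := by exact_mod_cast hlt.2
      omega
    -- from m = 0 : p ∣ j.val - k.val
    have hdvd : (p:ℤ) ∣ (j.val : ℤ) - (k.val : ℤ) := ⟨zj - zk, by linear_combination hm0 - hmdef⟩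
    have : (j.val : ZMod p) = (k.val : ZMod p) := by
      have := (ZMod.intCast_zmod_eq_zero_iff_dvd _ p).mpr hdvd
      push_cast at this
      linear_combination this
    rwa [ZMod.natCast_val, ZMod.natCast_val, ZMod.cast_id, ZMod.cast_id] at this
  -- the step function
  set g : ℝ → ℝ := fun u => ∑ j, c j * (Set.Ico (φ j - s) (φ j + s)).indicator (fun _ => (1:ℝ)) u with hgdef
  have hg0 : ∀ u, 0 ≤ g u := fun u => Finset.sum_nonneg fun j _ =>
    mul_nonneg (h0 j) (Set.indicator_nonneg (fun _ _ => zero_le_one) u)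
  have hgsupp : ∀ u, g u ≠ 0 → ∃ j, u ∈ Set.Ico (φ j - s) (φ j + s) := by
    intro u hu
    by_contra h
    push_neg at h
    exact hu (Finset.sum_eq_zero fun j _ => by rw [Set.indicator_of_notMem (h j), mul_zero])
  have hgM : ∀ u, g u ≤ M := by
    intro u
    by_cases h : ∃ j, u ∈ Set.Ico (φ j - s) (φ j + s)
    · obtain ⟨j0, hj0⟩ := h
      have hgu : g u = c j0 := by
        show (∑ j, c j * (Set.Ico (φ j - s) (φ j + s)).indicator (fun _ => (1:ℝ)) u) = c j0
        rw [Finset.sum_eq_single j0]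
        · rw [Set.indicator_of_mem hj0]; ring
        · intro k _ hk
          rw [Set.indicator_of_notMem, mul_zero]
          intro hku
          exact hk (hdisj u k j0 hku hj0)
        · intro hn; exact absurd (Finset.mem_univ j0) hn
      rw [hgu]; exact hcM j0
    · push_neg at h
      have hgu : g u = 0 := Finset.sum_eq_zero fun j _ => by
        rw [Set.indicator_of_notMem (h j), mul_zero]
      rw [hgu]; linarith
  -- pointwise inequality
  have hpt : ∀ u, (g u - M * (Set.Ico (-a) a).indicator (fun _ => (1:ℝ)) u)
      * (Real.cos u - Real.cos a) ≤ 0 := by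
    intro u
    by_cases hu : u ∈ Set.Ico (-a) a
    · rw [Set.indicator_of_mem hu]
      have h1 : g u - M * 1 ≤ 0 := by linarith [hgM u]
      have h2 : Real.cos a ≤ Real.cos u := by
        have habs : |u| ≤ a := abs_le.mpr ⟨hu.1, le_of_lt hu.2⟩
        calc Real.cos a ≤ Real.cos |u| :=
              Real.cos_le_cos_of_nonneg_of_le_pi (abs_nonneg u) (by linarith [pi_pos]) habs
          _ = Real.cos u := Real.cos_abs u
      exact mul_nonpos_of_nonpos_of_nonneg h1 (by linarith)
    · rw [Set.indicator_of_notMem hu, mul_zero, sub_zero]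
      rcases eq_or_ne (g u) 0 with h | h
      · rw [h, zero_mul]
      · obtain ⟨j, hj⟩ := hgsupp u h
        have hu1 : -π - s < u := by linarith [(hφmem j).1, hj.1]
        have hu2 : u < π + s := by linarith [(hφmem j).2, hj.2]
        have hau : a ≤ |u| := by
          rw [Set.mem_Ico, not_and_or, not_le, not_lt] at hu
          rcases hu with hu | hu
          · rw [abs_of_neg (by linarith)]; linarith
          · exact le_trans hu (le_abs_self u)
        have hcos : Real.cos u ≤ Real.cos a := by
          rcases le_or_gt |u| π with hle | hgt
          · calc Real.cos u = Real.cos |u| := (Real.cos_abs u).symm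
              _ ≤ Real.cos a := Real.cos_le_cos_of_nonneg_of_le_pi ha0 (by linarith [pi_pos]) hau
          · have hc : Real.cos u = Real.cos (2*π - |u|) := by
              rw [Real.cos_two_pi_sub, Real.cos_abs]
            rw [hc]
            apply Real.cos_le_cos_of_nonneg_of_le_pi ha0 (by linarith)
            have habs2 : |u| < π + s := abs_lt.mpr ⟨by linarith, hu2⟩
            linarith
        exact mul_nonpos_of_nonneg_of_nonpos (hg0 u) (by linarith)
  -- integrate
  have indmul : ∀ (S : Set ℝ) (u : ℝ), S.indicator (fun v => Real.cos v - Real.cos a) u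
      = S.indicator (fun _ => (1:ℝ)) u * (Real.cos u - Real.cos a) := by
    intro S u; by_cases h : u ∈ S <;> simp [h]
  have key : ∑ j, c j * (Real.sin (φ j + s) - Real.sin (φ j - s) - ((φ j + s) - (φ j - s)) * Real.cos a)
      - M * (Real.sin a - Real.sin (-a) - (a - -a) * Real.cos a) ≤ 0 := by
    have hint1 : Integrable (fun u => ∑ j, c j * (Set.Ico (φ j - s) (φ j + s)).indicator
        (fun v => Real.cos v - Real.cos a) u) := by
      apply MeasureTheory.integrable_finset_sum
      intro j _
      exact (integrable_piece _ _ _).const_mul _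
    have hint2 : Integrable (fun u => M * (Set.Ico (-a) a).indicator
        (fun v => Real.cos v - Real.cos a) u) := (integrable_piece _ _ _).const_mul _
    have hle : ∫ u, (fun u => ∑ j, c j * (Set.Ico (φ j - s) (φ j + s)).indicator
        (fun v => Real.cos v - Real.cos a) u - M * (Set.Ico (-a) a).indicator
        (fun v => Real.cos v - Real.cos a) u) u ≤ 0 := by
      apply MeasureTheory.integral_nonpos
      intro u
      have : (∑ j, c j * (Set.Ico (φ j - s) (φ j + s)).indicator (fun v => Real.cos v - Real.cos a) u)
          - M * (Set.Ico (-a) a).indicator (fun v => Real.cos v - Real.cos a) u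
          = (g u - M * (Set.Ico (-a) a).indicator (fun _ => (1:ℝ)) u) * (Real.cos u - Real.cos a) := by
        rw [hgdef]
        simp only [indmul, ← mul_assoc]
        rw [← Finset.sum_mul, ← sub_mul]
      simpa [this] using hpt u
    rw [MeasureTheory.integral_sub hint1 hint2] at hle
    rw [MeasureTheory.integral_finset_sum _ (fun j _ => (integrable_piece _ _ _).const_mul _)] at hle
    simp only [MeasureTheory.integral_const_mul] at hle
    have hrw : ∀ j : ZMod p, ∫ u, (Set.Ico (φ j - s) (φ j + s)).indicator
        (fun v => Real.cos v - Real.cos a) u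
        = Real.sin (φ j + s) - Real.sin (φ j - s) - ((φ j + s) - (φ j - s)) * Real.cos a := by
      intro j
      rw [integ_piece _ _ _ (by linarith)]
    have hrw2 : ∫ u, (Set.Ico (-a) a).indicator (fun v => Real.cos v - Real.cos a) u
        = Real.sin a - Real.sin (-a) - (a - -a) * Real.cos a := by
      rw [integ_piece _ _ _ (by linarith)]
    simp only [hrw, hrw2] at hle
    exact hle
  -- rearrange
  have e1 : ∑ j, c j * (Real.sin (φ j + s) - Real.sin (φ j - s) - ((φ j + s) - (φ j - s)) * Real.cos a)
      = 2 * Real.sin s * (∑ j, c j * Real.cos (φ j)) - 2 * s * Real.cos a * t := by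
    rw [htdef, Finset.mul_sum, Finset.mul_sum, ← Finset.sum_sub_distrib]
    apply Finset.sum_congr rfl
    intro j _
    rw [Real.sin_add, Real.sin_sub]
    ring
  rw [e1, Real.sin_neg] at key
  have hcancel : 2 * s * Real.cos a * t = 2 * a * M * Real.cos a := by
    linear_combination 2 * Real.cos a * hsa
  have hmain : (∑ j, c j * Real.cos (φ j)) * Real.sin s ≤ M * Real.sin a := by nlinarith [key, hcancel]
  have hsins : 0 < Real.sin s := Real.sin_pos_of_pos_of_lt_pi hs0 (by linarith [pi_pos])
  rw [le_div_iff₀ hsins]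
  calc (∑ j, c j * Real.cos (2 * π * (j.val) / p - θ)) * Real.sin s
      = (∑ j, c j * Real.cos (φ j)) * Real.sin s := by
        congr 1
        exact Finset.sum_congr rfl fun j _ => by rw [hφcos j]
    _ ≤ M * Real.sin a := hmain


section scratch
variable (p : ℕ) [NeZero p] (hp : 2 ≤ p)

lemma omg_pow_p (hp : 2 ≤ p) : omg p ^ p = 1 := by
  have hp0 : (p:ℂ) ≠ 0 := Nat.cast_ne_zero.mpr (by omega)
  rw [omg, ← Complex.exp_nat_mul]
  rw [show (p:ℂ) * (2 * Real.pi * Complex.I / p) = 2 * Real.pi * Complex.I by field_simp]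
  exact Complex.exp_two_pi_mul_I

lemma omg_ne_one (hp : 2 ≤ p) : omg p ≠ 1 := by
  have hp0 : (p:ℂ) ≠ 0 := Nat.cast_ne_zero.mpr (by omega)
  intro h
  rw [omg] at h
  obtain ⟨n, hn⟩ := Complex.exp_eq_one_iff.mp h
  have h2 : (2:ℂ) * (Real.pi:ℂ) * Complex.I ≠ 0 := by
    simp [Real.pi_ne_zero, Complex.I_ne_zero]
  have h3 := congrArg (fun z => z * (p:ℂ)) hn
  simp only [div_mul_cancel₀ _ hp0] at h3
  have h4 : (n:ℂ) * p * (2 * (Real.pi:ℂ) * Complex.I) = 1 * (2 * (Real.pi:ℂ) * Complex.I) := by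
    rw [one_mul]; linear_combination -h3
  have : (n:ℂ) * p = 1 := mul_right_cancel₀ h2 h4
  have hz : (n * p : ℤ) = 1 := by exact_mod_cast this
  rcases Int.mul_eq_one_iff_eq_one_or_neg_one.mp hz with ⟨_, h⟩ | ⟨_, h⟩ <;>
    [skip; skip] <;> omega

lemma sum_omg (hp : 2 ≤ p) : ∑ j : ZMod p, omg p ^ (j.val) = 0 := by
  have h1 : ∑ j : ZMod p, omg p ^ (j.val) = ∑ i ∈ Finset.range p, omg p ^ i := by
    apply Finset.sum_bij (fun (j : ZMod p) _ => j.val)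
    · intro j _; exact Finset.mem_range.mpr (ZMod.val_lt j)
    · intro j _ k _ h; exact ZMod.val_injective p h
    · intro i hi
      exact ⟨(i : ZMod p), Finset.mem_univ _, ZMod.val_cast_of_lt (Finset.mem_range.mp hi)⟩
    · intro j _; rfl
  rw [h1, geom_sum_eq (omg_ne_one p hp), omg_pow_p p hp, sub_self, zero_div]

end scratch

lemma lemA_half (p : ℕ) [NeZero p] (hp : 2 ≤ p) (M : ℝ) (hM : 0 < M) (c : ZMod p → ℝ)
    (h0 : ∀ j, 0 ≤ c j) (hcM : ∀ j, c j ≤ M) (ht : ∑ j, c j ≤ p * M / 2) :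
    ‖∑ j, (c j : ℂ) * omg p ^ (j.val : ℕ)‖
      ≤ M * Real.sin (π * (∑ j, c j) / (p * M)) / Real.sin (π / p) := by
  have hp0 : (p:ℂ) ≠ 0 := Nat.cast_ne_zero.mpr (by omega)
  set z := ∑ j, (c j : ℂ) * omg p ^ (j.val : ℕ) with hzdef
  set θ := z.arg with hθdef
  have hexp : Complex.exp (-(θ:ℝ) * Complex.I) * Complex.exp ((θ:ℝ) * Complex.I) = 1 := by
    rw [← Complex.exp_add, show (-(θ:ℝ) : ℂ) * Complex.I + (θ:ℝ) * Complex.I = 0 by ring,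
      Complex.exp_zero]
  have hmul : Complex.exp (-(θ:ℝ) * Complex.I) * z = (‖z‖ : ℂ) := by
    calc Complex.exp (-(θ:ℝ) * Complex.I) * z
        = Complex.exp (-(θ:ℝ) * Complex.I) * ((‖z‖ : ℂ)
            * Complex.exp ((z.arg :ℝ) * Complex.I)) := by rw [Complex.norm_mul_exp_arg_mul_I z]
      _ = (‖z‖ : ℂ) * (Complex.exp (-(θ:ℝ) * Complex.I)
            * Complex.exp ((θ:ℝ) * Complex.I)) := by rw [← hθdef]; ring
      _ = (‖z‖ : ℂ) := by rw [hexp, mul_one]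
  have hre : ‖z‖ = ∑ j, c j * Real.cos (2 * π * (j.val) / p - θ) := by
    have h1 : ‖z‖ = (Complex.exp (-(θ:ℝ) * Complex.I) * z).re := by
      rw [hmul, Complex.ofReal_re]
    rw [h1, hzdef, Finset.mul_sum, Complex.re_sum]
    apply Finset.sum_congr rfl
    intro j _
    have homg : Complex.exp (-(θ:ℝ) * Complex.I) * (omg p ^ (j.val : ℕ))
        = Complex.exp (((2 * π * (j.val) / p - θ : ℝ) : ℂ) * Complex.I) := by
      rw [omg, ← Complex.exp_nat_mul, ← Complex.exp_add]
      congr 1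
      push_cast
      field_simp
      ring
    calc (Complex.exp (-(θ:ℝ) * Complex.I) * ((c j : ℂ) * omg p ^ (j.val : ℕ))).re
        = ((c j : ℂ) * (Complex.exp (-(θ:ℝ) * Complex.I) * omg p ^ (j.val : ℕ))).re := by
          ring_nf
      _ = ((c j : ℂ) * Complex.exp (((2 * π * (j.val) / p - θ : ℝ) : ℂ) * Complex.I)).re := by
          rw [homg]
      _ = c j * Real.cos (2 * π * (j.val) / p - θ) := by
          rw [Complex.re_ofReal_mul, Complex.exp_ofReal_mul_I_re]
  rw [hre]
  exact core p hp M hM c h0 hcM θ ht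

lemma lemA (p : ℕ) [NeZero p] (hp : 2 ≤ p) (M : ℝ) (hM : 0 < M) (c : ZMod p → ℝ)
    (h0 : ∀ j, 0 ≤ c j) (hcM : ∀ j, c j ≤ M) :
    ‖∑ j, (c j : ℂ) * omg p ^ (j.val : ℕ)‖
      ≤ M * Real.sin (π * (∑ j, c j) / (p * M)) / Real.sin (π / p) := by
  by_cases hcase : ∑ j, c j ≤ p * M / 2
  · exact lemA_half p hp M hM c h0 hcM hcase
  · push_neg at hcase
    set c' : ZMod p → ℝ := fun j => M - c j with hc'def
    have hsum' : ∑ j, c' j = p * M - ∑ j, c j := by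
      rw [hc'def, Finset.sum_sub_distrib, Finset.sum_const, Finset.card_univ, ZMod.card,
        nsmul_eq_mul]
    have hz' : ∑ j, (c' j : ℂ) * omg p ^ (j.val : ℕ) = - ∑ j, (c j : ℂ) * omg p ^ (j.val : ℕ) := by
      have : ∑ j, (c' j : ℂ) * omg p ^ (j.val : ℕ)
          = (M:ℂ) * ∑ j : ZMod p, omg p ^ (j.val : ℕ) - ∑ j, (c j : ℂ) * omg p ^ (j.val : ℕ) := by
        rw [Finset.mul_sum, ← Finset.sum_sub_distrib]
        apply Finset.sum_congr rfl
        intro j _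
        rw [hc'def]
        push_cast
        ring
      rw [this, sum_omg p hp, mul_zero, zero_sub]
    have hb := lemA_half p hp M hM c' (fun j => by rw [hc'def]; simp; linarith [hcM j])
      (fun j => by rw [hc'def]; simp [h0 j]) (by rw [hsum']; linarith)
    rw [hz', norm_neg, hsum'] at hb
    have hsin : Real.sin (π * (p * M - ∑ j, c j) / (p * M)) = Real.sin (π * (∑ j, c j) / (p * M)) := by
      have hpM : (p:ℝ) * M ≠ 0 := by positivity
      rw [show π * (p * M - ∑ j, c j) / (p * M) = π - π * (∑ j, c j) / (p * M) by field_simp,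
        Real.sin_pi_sub]
    rwa [hsin] at hb


lemma tr_surj (q : ℕ) [Fact q.Prime] (L : Type*) [Field L] [Fintype L] [Algebra (ZMod q) L]
    {α : L} (hα : α ≠ 0) :
    Function.Surjective (fun x : L => Algebra.trace (ZMod q) L (α * x)) := by
  have hchar : ringChar L = q := by
    haveI : CharP L q := charP_of_injective_algebraMap (algebraMap (ZMod q) L).injective q
    exact ringChar.eq L q
  obtain ⟨b, hb⟩ : ∃ b : L, Algebra.trace (ZMod q) L (α * b) ≠ 0 := by
    subst hchar
    exact FiniteField.trace_to_zmod_nondegenerate L hα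
  intro y
  refine ⟨(y / Algebra.trace (ZMod q) L (α * b)) • b, ?_⟩
  show Algebra.trace (ZMod q) L (α * ((y / Algebra.trace (ZMod q) L (α * b)) • b)) = y
  rw [mul_smul_comm, _root_.map_smul, smul_eq_mul, div_mul_cancel₀ _ hb]

lemma fiber_card (q : ℕ) [Fact q.Prime] (L : Type*) [Field L] [Fintype L] [DecidableEq L]
    [Algebra (ZMod q) L] {α : L} (hα : α ≠ 0) (j : ZMod q) :
    (Finset.univ.filter (fun x : L => Algebra.trace (ZMod q) L (α * x) = j)).card * q
      = Fintype.card L := by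
  haveI : NeZero q := ⟨(Fact.out : q.Prime).ne_zero⟩
  set ψ : L → ZMod q := fun x => Algebra.trace (ZMod q) L (α * x) with hψ
  obtain ⟨e, he⟩ := tr_surj q L hα 1
  have hlin : ∀ (r : ZMod q) (x : L), ψ (x + r • e) = ψ x + r * ψ e := by
    intro r x
    show Algebra.trace (ZMod q) L (α * (x + r • e)) = _
    rw [mul_add, map_add, mul_smul_comm, _root_.map_smul, smul_eq_mul]
  have hψe : ψ e = 1 := he
  have hbij : ∀ j k : ZMod q,
      (Finset.univ.filter (fun x : L => ψ x = j)).card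
        = (Finset.univ.filter (fun x : L => ψ x = k)).card := by
    intro j k
    apply Finset.card_bij (fun x _ => x + (k - j) • e)
    · intro x hx
      simp only [Finset.mem_filter, Finset.mem_univ, true_and] at hx ⊢
      rw [hlin, hx, hψe, mul_one]
      ring
    · intro x hx x' hx' h
      exact add_right_cancel h
    · intro y hy
      refine ⟨y + (j - k) • e, ?_, ?_⟩
      · simp only [Finset.mem_filter, Finset.mem_univ, true_and] at hy ⊢
        rw [hlin, hy, hψe, mul_one]
        ring
      · rw [add_assoc, ← add_smul]
        simp
  have hpart : ∑ j : ZMod q, (Finset.univ.filter (fun x : L => ψ x = j)).card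
      = Fintype.card L := by
    rw [← Finset.card_univ]
    exact (Finset.card_eq_sum_card_fiberwise (fun x _ => Finset.mem_univ (ψ x))).symm
  have hconst : ∑ k : ZMod q, (Finset.univ.filter (fun x : L => ψ x = k)).card
      = (Finset.univ.filter (fun x : L => ψ x = j)).card * q := by
    rw [Finset.sum_congr rfl (fun k _ => hbij k j)]
    rw [Finset.sum_const, Finset.card_univ, ZMod.card, smul_eq_mul]
    ring
  rw [← hconst, hpart]

lemma perset (p w : ℕ) [Fact p.Prime] (hw : 1 ≤ w) (K : Type) [Field K] [Fintype K]
    [Algebra (ZMod p) K] (hK : Fintype.card K = p ^ w) (A : Finset K) {α : K} (hα : α ≠ 0) :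
    ‖ihat p K A α‖
      ≤ Real.sin (π * A.card / p ^ w) / (p * Real.sin (π / p)) := by
  classical
  have hp : 2 ≤ p := (Fact.out : p.Prime).two_le
  haveI : NeZero p := ⟨(Fact.out : p.Prime).ne_zero⟩
  have hp0 : (0:ℝ) < p := by positivity
  have hq0 : (0:ℝ) < (p:ℝ) ^ w := by positivity
  set T : K → ZMod p := fun x => Algebra.trace (ZMod p) K (α * x) with hT
  set c : ZMod p → ℝ := fun j => ((A.filter (fun x => T x = j)).card : ℝ) with hc
  set M : ℝ := (p:ℝ) ^ w / p with hM
  have hM0 : 0 < M := by positivity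
  have hfib : ∀ j : ZMod p, ((Finset.univ.filter (fun x : K => T x = j)).card : ℝ) = M := by
    intro j
    have := fiber_card p K hα j
    rw [hK] at this
    rw [hM, eq_div_iff (ne_of_gt hp0)]
    exact_mod_cast this
  have h0 : ∀ j, 0 ≤ c j := fun j => Nat.cast_nonneg _
  have hcM : ∀ j, c j ≤ M := by
    intro j
    rw [← hfib j]
    have h : (A.filter (fun x => T x = j)).card ≤ (Finset.univ.filter (fun x : K => T x = j)).card :=
      Finset.card_le_card (Finset.filter_subset_filter _ (Finset.subset_univ A))
    show ((A.filter (fun x => T x = j)).card : ℝ) ≤ _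
    exact_mod_cast h
  have hsum : ∑ j, c j = (A.card : ℝ) := by
    rw [hc]
    rw [← Nat.cast_sum]
    congr 1
    exact (Finset.card_eq_sum_card_fiberwise (fun x _ => Finset.mem_univ (T x))).symm
  -- rewrite ihat
  have h1 : ∑ x : K, (if x ∈ A then (1:ℂ) else 0) * chr p K (α * x)
      = ∑ x ∈ A, chr p K (α * x) := by
    simp only [ite_mul, one_mul, zero_mul]
    rw [Finset.sum_ite_mem, Finset.univ_inter]
  have h2 : ∑ x ∈ A, chr p K (α * x)
      = ∑ j : ZMod p, ((c j : ℝ) : ℂ) * omg p ^ (j.val : ℕ) := by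
    rw [← Finset.sum_fiberwise_of_maps_to (fun x _ => Finset.mem_univ (T x))
      (fun x => chr p K (α * x))]
    apply Finset.sum_congr rfl
    intro j _
    have : ∀ x ∈ A.filter (fun x => T x = j), chr p K (α * x) = omg p ^ (j.val : ℕ) := by
      intro x hx
      have hTx : T x = j := (Finset.mem_filter.mp hx).2
      rw [chr, ← hTx]
    rw [Finset.sum_congr rfl this, Finset.sum_const, nsmul_eq_mul, hc]
    push_cast
    ring
  have habs : ‖ihat p K A α‖
      = (1 / (p:ℝ)^w) * ‖∑ j : ZMod p, ((c j : ℝ) : ℂ) * omg p ^ (j.val : ℕ)‖ := by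
    rw [ihat, norm_mul, h1, h2, hK]
    congr 1
    rw [norm_div, norm_one, Complex.norm_natCast]
    push_cast
    ring
  rw [habs]
  have hb := lemA p hp M hM0 c h0 hcM
  rw [hsum] at hb
  have hpM : (p:ℝ) * M = (p:ℝ)^w := by
    rw [hM]; field_simp
  rw [hpM] at hb
  calc (1 / (p:ℝ)^w) * ‖∑ j : ZMod p, ((c j : ℝ) : ℂ) * omg p ^ (j.val : ℕ)‖
      ≤ (1 / (p:ℝ)^w) * (M * Real.sin (π * A.card / (p:ℝ)^w) / Real.sin (π / p)) := by
        apply mul_le_mul_of_nonneg_left hb (by positivity)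
    _ = Real.sin (π * A.card / p ^ w) / (p * Real.sin (π / p)) := by
        rw [hM]
        have hsin : Real.sin (π / p) ≠ 0 := by
          apply ne_of_gt
          apply Real.sin_pos_of_pos_of_lt_pi (by positivity)
          rw [div_lt_iff₀ hp0]
          nlinarith [pi_pos, mul_le_mul_of_nonneg_left (by exact_mod_cast hp : (2:ℝ) ≤ p) pi_pos.le]
        field_simp


/-- for sets `A₁,…,A_{2^μ} ⊆ K` with `∑|A_i| = p^w`,
`∑_i max_{α≠0} |1̂_{A_i}(α)| ≤ c_μ`. -/
theorem stmt6 (p w μ : ℕ) [Fact p.Prime] (hw : 1 ≤ w) (hμ : 1 ≤ μ)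
    (K : Type) [Field K] [Fintype K] [Algebra (ZMod p) K]
    (hK : Fintype.card K = p ^ w)
    (A : Fin (2 ^ μ) → Finset K)
    (hA : ∑ i, (A i).card = p ^ w) :
    ∑ i, (⨆ α : {a : K // a ≠ 0}, ‖ihat p K (A i) α.val‖)
      ≤ (2 : ℝ) ^ μ * Real.sin (Real.pi / 2 ^ μ) / (p * Real.sin (Real.pi / p)) := by
  classical
  have hp : 2 ≤ p := (Fact.out : p.Prime).two_le
  have hp0 : (0:ℝ) < p := by positivity
  have hp2 : (2:ℝ) ≤ p := by exact_mod_cast hp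
  have hq0 : (0:ℝ) < (p:ℝ) ^ w := by positivity
  have hn0 : (0:ℝ) < (2:ℝ) ^ μ := by positivity
  haveI : Nontrivial K := by
    apply Fintype.one_lt_card_iff_nontrivial.mp
    rw [hK]
    exact Nat.one_lt_pow (by omega) (by omega)
  haveI : Nonempty {a : K // a ≠ 0} :=
    ⟨⟨(exists_ne (0:K)).choose, (exists_ne (0:K)).choose_spec⟩⟩
  have hsinp : 0 < Real.sin (π / p) := by
    apply Real.sin_pos_of_pos_of_lt_pi (by positivity)
    rw [div_lt_iff₀ hp0]
    nlinarith [pi_pos, mul_le_mul_of_nonneg_left hp2 pi_pos.le]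
  have hden : (0:ℝ) < p * Real.sin (π / p) := by positivity
  have step1 : ∀ i, (⨆ α : {a : K // a ≠ 0}, ‖ihat p K (A i) α.val‖)
      ≤ Real.sin (π * (A i).card / p ^ w) / (p * Real.sin (π / p)) := by
    intro i
    exact ciSup_le fun α => perset p w hw K hK (A i) α.2
  have hAq : ∑ i, ((A i).card : ℝ) = (p:ℝ) ^ w := by
    rw [← Nat.cast_sum, hA]
    push_cast; ring
  have hjen := (strictConcaveOn_sin_Icc.concaveOn).le_map_sum (t := Finset.univ)
      (w := fun _ : Fin (2 ^ μ) => ((2:ℝ) ^ μ)⁻¹)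
      (p := fun i => π * (A i).card / (p:ℝ) ^ w)
      (fun i _ => by positivity)
      (by
        rw [Finset.sum_const, Finset.card_univ, Fintype.card_fin, nsmul_eq_mul]
        push_cast
        field_simp)
      (fun i _ => by
        constructor
        · positivity
        · rw [div_le_iff₀ hq0]
          have hle : ((A i).card : ℝ) ≤ (p:ℝ) ^ w := by
            rw [← hAq]
            exact Finset.single_le_sum (f := fun i => ((A i).card : ℝ))
              (fun i _ => by positivity) (Finset.mem_univ i)
          nlinarith [pi_pos])
  have hcenter : ∑ i, ((2:ℝ) ^ μ)⁻¹ • (π * ((A i).card : ℝ) / (p:ℝ) ^ w) = π / 2 ^ μ := by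
    simp only [smul_eq_mul]
    rw [← Finset.mul_sum]
    rw [show ∑ i, π * ((A i).card : ℝ) / (p:ℝ) ^ w = π * (∑ i, ((A i).card : ℝ)) / (p:ℝ) ^ w by
      rw [Finset.mul_sum, Finset.sum_div]]
    rw [hAq]
    field_simp
  rw [hcenter] at hjen
  simp only [smul_eq_mul] at hjen
  rw [← Finset.mul_sum] at hjen
  have hsum_sin : ∑ i, Real.sin (π * ((A i).card : ℝ) / (p:ℝ) ^ w)
      ≤ (2:ℝ) ^ μ * Real.sin (π / 2 ^ μ) := by
    rw [← inv_mul_le_iff₀ hn0]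
    exact hjen
  calc ∑ i, (⨆ α : {a : K // a ≠ 0}, ‖ihat p K (A i) α.val‖)
      ≤ ∑ i, Real.sin (π * ((A i).card : ℝ) / (p:ℝ) ^ w) / (p * Real.sin (π / p)) :=
        Finset.sum_le_sum fun i _ => step1 i
    _ = (∑ i, Real.sin (π * ((A i).card : ℝ) / (p:ℝ) ^ w)) / (p * Real.sin (π / p)) := by
        rw [Finset.sum_div]
    _ ≤ ((2:ℝ) ^ μ * Real.sin (π / 2 ^ μ)) / (p * Real.sin (π / p)) := by
        gcongr

end aux
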